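/- Let x, y ∈ ℤ² with ‖x‖ = s → ∞, ln‖y‖ ∼ ln s, and ln‖x−y‖ ∼ β ln s for some β ∈ [0,1]. Then for the vacant set 𝒱^α of two-dimensional random interlacements, P[{x,y} ⊆ 𝒱^α] = s^{−4α/(4−β) + o(1)}. -/

import Mathlib

open Filter

/-- Euclidean norm of a lattice point. -/
noncomputable def enorm2 (x : ℤ × ℤ) : ℝ := Real.sqrt ((x.1 : ℝ) ^ 2 + (x.2 : ℝ) ^ 2)

lemma enorm2_eq_abs (z : ℤ × ℤ) : enorm2 z = ‖(⟨(z.1 : ℝ), (z.2 : ℝ)⟩ : ℂ)‖ := by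
  simp [enorm2, Complex.norm_def, Complex.normSq_mk, sq]

lemma one_le_enorm2 {z : ℤ × ℤ} (hz : z ≠ 0) : 1 ≤ enorm2 z := by
  rw [show (1:ℝ) = Real.sqrt 1 by simp]
  apply Real.sqrt_le_sqrt
  have h1 : z.1 ≠ 0 ∨ z.2 ≠ 0 := by
    by_contra hc
    push_neg at hc
    exact hz (Prod.ext hc.1 hc.2)
  rcases h1 with h1 | h1
  · have : (1:ℝ) ≤ (z.1:ℝ)^2 := by
      have := Int.one_le_abs h1
      have : (1:ℝ) ≤ |(z.1:ℝ)| := by exact_mod_cast (by simpa using this)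
      nlinarith [abs_nonneg (z.1:ℝ), sq_abs (z.1:ℝ)]
    nlinarith [sq_nonneg (z.2:ℝ)]
  · have : (1:ℝ) ≤ (z.2:ℝ)^2 := by
      have := Int.one_le_abs h1
      have : (1:ℝ) ≤ |(z.2:ℝ)| := by exact_mod_cast (by simpa using this)
      nlinarith [abs_nonneg (z.2:ℝ), sq_abs (z.2:ℝ)]
    nlinarith [sq_nonneg (z.1:ℝ)]

lemma enorm2_triangle (u v : ℤ × ℤ) : enorm2 u ≤ enorm2 v + enorm2 (u - v) := by
  rw [enorm2_eq_abs, enorm2_eq_abs, enorm2_eq_abs]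
  have : (⟨(u.1:ℝ), (u.2:ℝ)⟩ : ℂ) = ⟨(v.1:ℝ), (v.2:ℝ)⟩ + ⟨((u-v).1:ℝ), ((u-v).2:ℝ)⟩ := by
    simp [Complex.ext_iff, Prod.fst_sub, Prod.snd_sub]
  rw [this]
  exact norm_add_le _ _

lemma enorm2_neg (z : ℤ × ℤ) : enorm2 (-z) = enorm2 z := by
  simp [enorm2]

lemma log_diff_le {x y : ℤ × ℤ} (hx : x ≠ 0) (hy : y ≠ 0) (hxy : x - y ≠ 0) :
    |Real.log (enorm2 x) - Real.log (enorm2 y)| ≤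
      Real.log 2 + Real.log (enorm2 (x - y)) := by
  set u := enorm2 x with hu
  set v := enorm2 y with hv
  set w := enorm2 (x - y) with hw
  have h1u : 1 ≤ u := one_le_enorm2 hx
  have h1v : 1 ≤ v := one_le_enorm2 hy
  have h1w : 1 ≤ w := one_le_enorm2 hxy
  have key : ∀ p q r : ℝ, 1 ≤ p → 1 ≤ q → 1 ≤ r → p ≤ q + r →
      Real.log p - Real.log q ≤ Real.log 2 + Real.log r := by
    intro p q r hp hq hr hpqr
    have h2 : p ≤ 2 * q * r := by nlinarith
    have := Real.log_le_log (by linarith) h2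
    rw [Real.log_mul (by positivity) (by linarith), Real.log_mul (by norm_num) (by linarith)] at this
    linarith
  have ht1 : u ≤ v + w := enorm2_triangle x y
  have ht2 : v ≤ u + w := by
    have := enorm2_triangle y x
    rwa [show y - x = -(x - y) by ring, enorm2_neg, ← hw] at this
  rw [abs_sub_le_iff]
  exact ⟨key u v w h1u h1v h1w ht1, key v u w h1v h1u h1w ht2⟩

lemma abs_fst_le_enorm2 (z : ℤ × ℤ) : |(z.1 : ℝ)| ≤ enorm2 z := by
  rw [← Real.sqrt_sq_eq_abs]
  exact Real.sqrt_le_sqrt (by nlinarith [sq_nonneg (z.2:ℝ)])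

lemma abs_snd_le_enorm2 (z : ℤ × ℤ) : |(z.2 : ℝ)| ≤ enorm2 z := by
  rw [← Real.sqrt_sq_eq_abs]
  exact Real.sqrt_le_sqrt (by nlinarith [sq_nonneg (z.1:ℝ)])

lemma a_lower_bound (a : ℤ × ℤ → ℝ) (C : ℝ)
    (hapos : ∀ z : ℤ × ℤ, z ≠ 0 → 0 < a z)
    (haAsymp : ∀ z : ℤ × ℤ, z ≠ 0 →
      |a z - (2 / Real.pi) * Real.log (enorm2 z)| ≤ C) :
    ∃ c : ℝ, 0 < c ∧ ∀ z : ℤ × ℤ, z ≠ 0 → c ≤ a z := by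
  have hone : ((1:ℤ), (0:ℤ)) ≠ (0 : ℤ × ℤ) := by
    simp [Prod.ext_iff]
  have hC0 : 0 ≤ C := le_trans (abs_nonneg _) (haAsymp _ hone)
  have hπ : 0 < Real.pi := Real.pi_pos
  set M : ℝ := Real.exp (Real.pi / 2 * (C + 1)) with hM
  have hM1 : 1 ≤ M := by
    rw [hM]
    have : (0:ℝ) ≤ Real.pi / 2 * (C + 1) := by positivity
    calc (1:ℝ) = Real.exp 0 := by simp
    _ ≤ _ := Real.exp_le_exp.2 this
  set N : ℤ := ⌈M⌉ with hN
  have hN1 : 1 ≤ N := by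
    rw [hN]
    exact_mod_cast Int.le_ceil_iff.mpr (by push_cast; linarith) |>.trans_eq rfl
  set S : Finset (ℤ × ℤ) := (Finset.Icc (-N, -N) (N, N)).filter (· ≠ 0) with hS
  have hSne : S.Nonempty := by
    refine ⟨((1:ℤ), (0:ℤ)), ?_⟩
    rw [hS, Finset.mem_filter, Finset.mem_Icc]
    refine ⟨⟨?_, ?_⟩, hone⟩
    · exact Prod.mk_le_mk.2 ⟨by omega, by omega⟩
    · exact Prod.mk_le_mk.2 ⟨by omega, by omega⟩
  set c0 : ℝ := S.inf' hSne a with hc0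
  refine ⟨min 1 c0, ?_, ?_⟩
  · apply lt_min one_pos
    rw [hc0, Finset.lt_inf'_iff]
    intro z hz
    rw [hS, Finset.mem_filter] at hz
    exact hapos z hz.2
  · intro z hz
    by_cases hcase : enorm2 z ≤ M
    · have hmem : z ∈ S := by
        have h1 : |(z.1:ℝ)| ≤ M := (abs_fst_le_enorm2 z).trans hcase
        have h2 : |(z.2:ℝ)| ≤ M := (abs_snd_le_enorm2 z).trans hcase
        have hNM : M ≤ (N:ℝ) := Int.le_ceil M
        rw [abs_le] at h1 h2
        have e1 : -N ≤ z.1 := by exact_mod_cast (by push_cast; linarith : ((-N:ℤ):ℝ) ≤ (z.1:ℝ))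
        have e2 : z.1 ≤ N := by exact_mod_cast (by push_cast; linarith : ((z.1:ℤ):ℝ) ≤ ((N:ℤ):ℝ))
        have e3 : -N ≤ z.2 := by exact_mod_cast (by push_cast; linarith : ((-N:ℤ):ℝ) ≤ (z.2:ℝ))
        have e4 : z.2 ≤ N := by exact_mod_cast (by push_cast; linarith : ((z.2:ℤ):ℝ) ≤ ((N:ℤ):ℝ))
        rw [hS, Finset.mem_filter, Finset.mem_Icc]
        exact ⟨⟨Prod.mk_le_mk.2 ⟨e1, e3⟩, Prod.mk_le_mk.2 ⟨e2, e4⟩⟩, hz⟩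
      exact (min_le_right _ _).trans (Finset.inf'_le a hmem)
    · push_neg at hcase
      have hMz : 0 < M := by linarith
      have hlog : Real.pi / 2 * (C + 1) ≤ Real.log (enorm2 z) := by
        have := Real.log_le_log hMz hcase.le
        rwa [hM, Real.log_exp] at this
      have hbound := haAsymp z hz
      rw [abs_le] at hbound
      have h2π : (0:ℝ) < 2 / Real.pi := by positivity
      have : (1:ℝ) ≤ (2 / Real.pi) * Real.log (enorm2 z) - C := by
        have : (2 / Real.pi) * (Real.pi / 2 * (C + 1)) ≤ (2 / Real.pi) * Real.log (enorm2 z) :=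
          mul_le_mul_of_nonneg_left hlog h2π.le
        have heq : (2 / Real.pi) * (Real.pi / 2 * (C + 1)) = C + 1 := by
          field_simp
        linarith
      have : (1:ℝ) ≤ a z := by linarith
      exact (min_le_left _ _).trans this

lemma psi_ratio (P A B D T : ℝ) (hT : T ≠ 0) (hD : D ≠ 0) :
    (-(P) * (A * B * D /
        (A * B + A * D + B * D - (1/2) * (A^2 + B^2 + D^2)))) / T
      = -(P) * ((A/T * (B/T)) /
          (A/T + B/T - ((A - B)^2 / (D * T))/2 - (D/T)/2)) := by
  have hden : A/T + B/T - ((A - B)^2 / (D * T))/2 - (D/T)/2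
      = (A * B + A * D + B * D - (1/2) * (A^2 + B^2 + D^2)) / (D * T) := by
    field_simp
    ring
  rw [hden]
  rcases eq_or_ne (A * B + A * D + B * D - (1/2) * (A^2 + B^2 + D^2)) 0 with h0 | h0
  · rw [h0]; simp
  · have key : (A/T * (B/T)) / ((A * B + A * D + B * D - (1/2) * (A^2 + B^2 + D^2)) / (D*T))
        = A * B * D / (A * B + A * D + B * D - (1/2) * (A^2 + B^2 + D^2)) / T := by
      rw [div_div_eq_mul_div, div_div]
      rw [div_eq_div_iff h0 (mul_ne_zero h0 hT)]
      field_simp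
    rw [key, mul_div_assoc]

set_option maxHeartbeats 1600000 in
/-- If `‖x n‖ = s n → ∞`, `ln‖y n‖ ∼ ln (s n)` and
`ln‖x n − y n‖ ∼ β ln (s n)` with `β ∈ [0,1]`, then
`P[{x n, y n} ⊆ 𝒱^α] = (s n)^{−4α/(4−β) + o(1)}`, i.e. the logarithm of this probability
divided by `ln (s n)` tends to `−4α/(4−β)`.  Here
`P[{x,y} ⊆ 𝒱^α] = exp(−πα Ψ(x,y))` with the two-point formula for `Ψ`, and
`a z = (2/π) ln‖z‖ + O(1)`. -/
theorem vacant_two_point_asymptotics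
    (a : ℤ × ℤ → ℝ) (C : ℝ)
    (hapos : ∀ z : ℤ × ℤ, z ≠ 0 → 0 < a z)
    (haAsymp : ∀ z : ℤ × ℤ, z ≠ 0 →
      |a z - (2 / Real.pi) * Real.log (enorm2 z)| ≤ C)
    (α β : ℝ) (hα : 0 < α) (hβ0 : 0 ≤ β) (hβ1 : β ≤ 1)
    (x y : ℕ → ℤ × ℤ)
    (hx0 : ∀ n, x n ≠ 0) (hy0 : ∀ n, y n ≠ 0) (hxy : ∀ n, x n ≠ y n)
    (s : ℕ → ℝ) (hs : ∀ n, s n = enorm2 (x n))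
    (hsTop : Tendsto s atTop atTop)
    (hy : Tendsto (fun n => Real.log (enorm2 (y n)) / Real.log (s n)) atTop (nhds 1))
    (hxysub : Tendsto (fun n => Real.log (enorm2 (x n - y n)) / Real.log (s n))
      atTop (nhds β))
    (Pvac : ℕ → ℝ)  -- `Pvac n = P[{x n, y n} ⊆ 𝒱^α]`
    (hchar : ∀ n, Pvac n = Real.exp (-(Real.pi * α) *
      (a (x n) * a (y n) * a (x n - y n) /
        (a (x n) * a (y n) + a (x n) * a (x n - y n) + a (y n) * a (x n - y n)
          - (1 / 2) * (a (x n) ^ 2 + a (y n) ^ 2 + a (x n - y n) ^ 2))))) :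
    Tendsto (fun n => Real.log (Pvac n) / Real.log (s n)) atTop
      (nhds (-(4 * α) / (4 - β))) := by
  obtain ⟨c, hc, hclb⟩ := a_lower_bound a C hapos haAsymp
  have hπ : 0 < Real.pi := Real.pi_pos
  have hone : ((1:ℤ), (0:ℤ)) ≠ (0 : ℤ × ℤ) := by simp [Prod.ext_iff]
  have hC0 : 0 ≤ C := le_trans (abs_nonneg _) (haAsymp _ hone)
  set t : ℕ → ℝ := fun n => Real.log (s n) with ht
  have htt : Tendsto t atTop atTop := Real.tendsto_log_atTop.comp hsTop
  have hev1 : ∀ᶠ n in atTop, 1 ≤ t n := htt.eventually_ge_atTop 1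
  have hxy0 : ∀ n, x n - y n ≠ 0 := fun n => sub_ne_zero.2 (hxy n)
  -- generic ratio convergence
  have key : ∀ (g : ℕ → ℤ × ℤ), (∀ n, g n ≠ 0) → ∀ L : ℝ,
      Tendsto (fun n => Real.log (enorm2 (g n)) / t n) atTop (nhds L) →
      Tendsto (fun n => a (g n) / t n) atTop (nhds (2 / Real.pi * L)) := by
    intro g hg L hL
    have hdiff : Tendsto
        (fun n => (a (g n) - 2 / Real.pi * Real.log (enorm2 (g n))) / t n) atTop (nhds 0) := by
      apply squeeze_zero_norm' (a := fun n => C / t n)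
      · filter_upwards [hev1] with n hn
        rw [Real.norm_eq_abs, abs_div, abs_of_pos (by linarith : (0:ℝ) < t n)]
        gcongr
        exact haAsymp _ (hg n)
      · exact tendsto_const_nhds.div_atTop htt
    have heq : ∀ n, a (g n) / t n
        = 2 / Real.pi * (Real.log (enorm2 (g n)) / t n)
          + (a (g n) - 2 / Real.pi * Real.log (enorm2 (g n))) / t n := by
      intro n
      ring
    have := (hL.const_mul (2 / Real.pi)).add hdiff
    rw [add_zero] at this
    exact Tendsto.congr (fun n => (heq n).symm) this
  -- the three normalized quantities
  have hp : Tendsto (fun n => a (x n) / t n) atTop (nhds (2 / Real.pi)) := by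
    have hx1 : Tendsto (fun n => Real.log (enorm2 (x n)) / t n) atTop (nhds 1) := by
      have heq : (fun n => Real.log (enorm2 (x n)) / t n) =ᶠ[atTop] fun _ => (1:ℝ) := by
        filter_upwards [hev1] with n hn
        rw [← hs n]
        show t n / t n = 1
        exact div_self (by linarith)
      exact Tendsto.congr' heq.symm tendsto_const_nhds
    simpa using key x hx0 1 hx1
  have hq : Tendsto (fun n => a (y n) / t n) atTop (nhds (2 / Real.pi)) := by
    simpa using key y hy0 1 hy
  have hr : Tendsto (fun n => a (x n - y n) / t n) atTop (nhds (2 / Real.pi * β)) :=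
    key (fun n => x n - y n) hxy0 β hxysub
  -- the error term e
  set e : ℕ → ℝ := fun n => (a (x n) - a (y n))^2 / (a (x n - y n) * t n) with he
  set C₁ : ℝ := 3*C + 2/Real.pi * Real.log 2 with hC₁
  have hC₁0 : 0 ≤ C₁ := by
    have := Real.log_nonneg (by norm_num : (1:ℝ) ≤ 2)
    have h2π : (0:ℝ) ≤ 2 / Real.pi := by positivity
    rw [hC₁]; nlinarith
  have he0 : Tendsto e atTop (nhds 0) := by
    have hpq0 : Tendsto (fun n => |a (x n)/t n - a (y n)/t n|) atTop (nhds 0) := by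
      have := (hp.sub hq).abs
      simpa using this
    apply squeeze_zero' (g := fun n => (c + C₁)/c * |a (x n)/t n - a (y n)/t n|)
    · filter_upwards [hev1] with n hn
      have hD : 0 < a (x n - y n) := hapos _ (hxy0 n)
      have : (0:ℝ) < t n := by linarith
      simp only [he]
      positivity
    · filter_upwards [hev1] with n hn
      have hD : 0 < a (x n - y n) := hapos _ (hxy0 n)
      have hDc : c ≤ a (x n - y n) := hclb _ (hxy0 n)
      have htpos : (0:ℝ) < t n := by linarith
      have h1 := haAsymp (x n) (hx0 n)
      have h2 := haAsymp (y n) (hy0 n)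
      have h3 := haAsymp (x n - y n) (hxy0 n)
      have h4 := log_diff_le (hx0 n) (hy0 n) (hxy0 n)
      rw [abs_le] at h1 h2 h3 h4
      have h2π : (0:ℝ) < 2 / Real.pi := by positivity
      have hAB : |a (x n) - a (y n)| ≤ a (x n - y n) + C₁ := by
        rw [abs_le]
        have hm1 : 2/Real.pi * (Real.log (enorm2 (x n)) - Real.log (enorm2 (y n)))
            ≤ 2/Real.pi * (Real.log 2 + Real.log (enorm2 (x n - y n))) :=
          mul_le_mul_of_nonneg_left h4.2 h2π.le
        have hm2 : 2/Real.pi * (-(Real.log 2 + Real.log (enorm2 (x n - y n))))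
            ≤ 2/Real.pi * (Real.log (enorm2 (x n)) - Real.log (enorm2 (y n))) :=
          mul_le_mul_of_nonneg_left (by linarith [h4.1]) h2π.le
        rw [hC₁]
        constructor <;> nlinarith [h1.1, h1.2, h2.1, h2.2, h3.1, h3.2]
      have habs_div : |a (x n)/t n - a (y n)/t n| = |a (x n) - a (y n)| / t n := by
        rw [div_sub_div_same, abs_div, abs_of_pos htpos]
      simp only [he]
      rw [habs_div, div_le_iff₀ (by positivity : (0:ℝ) < a (x n - y n) * t n)]
      have expand : (c + C₁)/c * (|a (x n) - a (y n)| / t n) * (a (x n - y n) * t n)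
          = (c + C₁)/c * |a (x n) - a (y n)| * a (x n - y n) := by
        field_simp
      rw [expand]
      have h8 : |a (x n) - a (y n)| * c ≤ (c + C₁) * a (x n - y n) := by
        nlinarith [mul_nonneg hC₁0 (sub_nonneg.2 hDc), abs_nonneg (a (x n) - a (y n))]
      have h9 : (a (x n) - a (y n))^2 = |a (x n) - a (y n)| * |a (x n) - a (y n)| := by
        rw [← sq_abs, sq]
      have h10 : |a (x n) - a (y n)| ≤ (c + C₁)/c * a (x n - y n) := by
        rw [div_mul_eq_mul_div, le_div_iff₀ hc]
        linarith [h8]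
      calc (a (x n) - a (y n))^2
          = |a (x n) - a (y n)| * |a (x n) - a (y n)| := h9
        _ ≤ |a (x n) - a (y n)| * ((c + C₁)/c * a (x n - y n)) :=
            mul_le_mul_of_nonneg_left h10 (abs_nonneg _)
        _ = (c + C₁)/c * |a (x n) - a (y n)| * a (x n - y n) := by ring
    · simpa using hpq0.const_mul ((c + C₁)/c)
  -- identity for the logarithm
  have hident : ∀ᶠ n in atTop, Real.log (Pvac n) / t n =
      -(Real.pi * α) * ((a (x n)/t n * (a (y n)/t n)) /
        (a (x n)/t n + a (y n)/t n - e n / 2 - (a (x n - y n)/t n)/2)) := by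
    filter_upwards [hev1] with n hn
    have htpos : (0:ℝ) < t n := by linarith
    have hDpos : 0 < a (x n - y n) := hapos _ (hxy0 n)
    rw [hchar n, Real.log_exp]
    simp only [he]
    exact psi_ratio (Real.pi * α) (a (x n)) (a (y n)) (a (x n - y n)) (t n)
      (ne_of_gt htpos) (ne_of_gt hDpos)
  -- final limit
  have hden : Tendsto (fun n => a (x n)/t n + a (y n)/t n - e n/2 - (a (x n - y n)/t n)/2)
      atTop (nhds (2/Real.pi + 2/Real.pi - 0/2 - (2/Real.pi * β)/2)) :=
    ((hp.add hq).sub (he0.div_const 2)).sub (hr.div_const 2)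
  have hne : 2/Real.pi + 2/Real.pi - 0/2 - (2/Real.pi * β)/2 ≠ 0 := by
    have heq : 2/Real.pi + 2/Real.pi - 0/2 - (2/Real.pi * β)/2 = (4 - β)/Real.pi := by
      field_simp; ring
    rw [heq]
    exact div_ne_zero (by linarith) (ne_of_gt hπ)
  have hfin := ((hp.mul hq).div hden hne).const_mul (-(Real.pi * α))
  have hval : -(Real.pi * α) * ((2/Real.pi * (2/Real.pi)) /
      (2/Real.pi + 2/Real.pi - 0/2 - (2/Real.pi * β)/2)) = -(4 * α)/(4 - β) := by
    have h4β : (4:ℝ) - β ≠ 0 := by linarith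
    have hd : 2/Real.pi + 2/Real.pi - 0/2 - (2/Real.pi * β)/2 = (4 - β)/Real.pi := by
      field_simp; ring
    rw [hd]
    rw [eq_div_iff h4β]
    field_simp [ne_of_gt hπ, h4β]
    ring
  rw [hval] at hfin
  exact Tendsto.congr' (EventuallyEq.symm hident) hfin
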